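/- arXiv:1212.3841 — 3 statements merged into one kernel-verified Lean document; each statement's English description precedes it below -/
import Mathlib

section
/- The function S(x) = ln(ln x) + ∑_{n=1}^{∞} (ln x)^n / (n · n!) is well defined on (1, ∞) (the series converges absolutely for every x > 1) and is differentiable there with derivative S′(x) = 1 / ln x. -/
open Real

theorem aux_summable (x : ℝ) (hx : 1 < x) :
    Summable (fun n : ℕ =>
      |Real.log x ^ (n + 1) / (((n : ℝ) + 1) * (Nat.factorial (n + 1) : ℝ))|) := by
  have ht : 0 < Real.log x := Real.log_pos hx
  have hshift : Summable (fun n : ℕ => Real.log x ^ (n + 1) / (Nat.factorial (n + 1) : ℝ)) :=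
    (summable_nat_add_iff 1).mpr (Real.summable_pow_div_factorial (Real.log x))
  apply Summable.of_nonneg_of_le (fun n => abs_nonneg _) _ hshift
  intro n
  rw [abs_of_nonneg (by positivity)]
  have hfac : (0:ℝ) < (Nat.factorial (n+1) : ℝ) := by positivity
  have hle : (Nat.factorial (n+1) : ℝ) ≤ ((n:ℝ) + 1) * (Nat.factorial (n+1) : ℝ) := by
    nlinarith [(Nat.cast_nonneg n : (0:ℝ) ≤ n)]
  gcongr

theorem aux_exp_tsum (t : ℝ) : Real.exp t = ∑' n : ℕ, t ^ n / (Nat.factorial n : ℝ) := by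
  rw [Real.exp_eq_exp_ℝ, NormedSpace.exp_eq_tsum_div]

/-- The function `S(x) = ln(ln x) + ∑_{n=1}^∞ (ln x)^n/(n·n!)` is well defined on
`(1, ∞)` (the series converges absolutely for every `x > 1`) and is differentiable
there with derivative `S′(x) = 1/ln x`. -/
theorem gram_type_series_hasDerivAt :
    (∀ x : ℝ, 1 < x →
      Summable (fun n : ℕ =>
        |Real.log x ^ (n + 1) / (((n : ℝ) + 1) * (Nat.factorial (n + 1) : ℝ))|)) ∧
    (∀ x : ℝ, 1 < x →
      HasDerivAt
        (fun y : ℝ =>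
          Real.log (Real.log y) +
            ∑' n : ℕ, Real.log y ^ (n + 1) / (((n : ℝ) + 1) * (Nat.factorial (n + 1) : ℝ)))
        (1 / Real.log x) x) := by
  refine ⟨aux_summable, fun x hx => ?_⟩
  have hx0 : (0:ℝ) < x := lt_trans one_pos hx
  have ht : 0 < Real.log x := Real.log_pos hx
  set t := Real.log x with htdef
  -- the open set
  set s : Set ℝ := Set.Ioo 1 (x + 1) with hsdef
  have hxs : x ∈ s := ⟨hx, by linarith⟩
  set L : ℝ := Real.log (x + 1) with hLdef
  have hL : 0 < L := Real.log_pos (by linarith)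
  -- derivative of each term
  set g : ℕ → ℝ → ℝ := fun n y =>
    Real.log y ^ (n + 1) / (((n : ℝ) + 1) * (Nat.factorial (n + 1) : ℝ)) with hgdef
  set g' : ℕ → ℝ → ℝ := fun n y =>
    Real.log y ^ n / (y * (Nat.factorial (n + 1) : ℝ)) with hg'def
  have hg : ∀ n : ℕ, ∀ y ∈ s, HasDerivAt (g n) (g' n y) y := by
    intro n y hy
    have hy1 : (1:ℝ) < y := hy.1
    have hy0 : (0:ℝ) < y := lt_trans one_pos hy1
    have hlog : HasDerivAt Real.log y⁻¹ y := Real.hasDerivAt_log (ne_of_gt hy0)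
    have hpow : HasDerivAt (fun z => Real.log z ^ (n + 1))
        ((↑(n + 1) : ℝ) * Real.log y ^ n * y⁻¹) y := by
      simpa using hlog.fun_pow (n + 1)
    have := hpow.div_const (((n : ℝ) + 1) * (Nat.factorial (n + 1) : ℝ))
    refine this.congr_deriv ?_
    have hfac : ((Nat.factorial (n + 1) : ℝ)) ≠ 0 := by positivity
    simp only [hg'def]
    push_cast
    field_simp
  -- bound on derivatives
  have hg' : ∀ n : ℕ, ∀ y ∈ s, ‖g' n y‖ ≤ L ^ n / (Nat.factorial n : ℝ) := by
    intro n y hy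
    have hy1 : (1:ℝ) < y := hy.1
    have hy0 : (0:ℝ) < y := lt_trans one_pos hy1
    have hly : 0 < Real.log y := Real.log_pos hy1
    have hlyL : Real.log y ≤ L := Real.log_le_log hy0 (le_of_lt hy.2)
    have h1 : ‖g' n y‖ = Real.log y ^ n / (y * (Nat.factorial (n + 1) : ℝ)) := by
      rw [Real.norm_eq_abs, abs_of_nonneg (by positivity)]
    rw [h1]
    have hfacle : (Nat.factorial n : ℝ) ≤ y * (Nat.factorial (n + 1) : ℝ) := by
      have h2 : (Nat.factorial n : ℝ) ≤ (Nat.factorial (n + 1) : ℝ) := by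
        exact_mod_cast Nat.factorial_le (Nat.le_succ n)
      nlinarith [(by positivity : (0:ℝ) < (Nat.factorial (n+1) : ℝ))]
    have hpowle : Real.log y ^ n ≤ L ^ n := pow_le_pow_left₀ (le_of_lt hly) hlyL n
    exact div_le_div₀ (by positivity) hpowle (by positivity) hfacle
  -- summability of bounds
  have hu : Summable (fun n : ℕ => L ^ n / (Nat.factorial n : ℝ)) :=
    Real.summable_pow_div_factorial L
  -- summability at x
  have hg0 : Summable (fun n => g n x) := (aux_summable x hx).of_abs
  -- differentiate the series
  have hseries : HasDerivAt (fun z => ∑' n, g n z) (∑' n, g' n x) x :=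
    hasDerivAt_tsum_of_isPreconnected hu isOpen_Ioo (isPreconnected_Ioo)
      hg hg' hxs hg0 hxs
  -- compute the sum of derivatives
  have hsum : ∑' n : ℕ, g' n x = (x - 1) / (x * t) := by
    have h1 : ∀ n : ℕ, g' n x = (1 / (x * t)) * (t ^ (n+1) / (Nat.factorial (n+1) : ℝ)) := by
      intro n
      simp only [hg'def]
      rw [pow_succ]
      field_simp
      ring
    rw [tsum_congr h1, tsum_mul_left]
    have h2 : ∑' n : ℕ, t ^ (n+1) / (Nat.factorial (n+1) : ℝ) = Real.exp t - 1 := by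
      have h3 := aux_exp_tsum t
      have h4 : Summable (fun n : ℕ => t ^ n / (Nat.factorial n : ℝ)) :=
        Real.summable_pow_div_factorial t
      rw [h4.tsum_eq_zero_add] at h3
      simp at h3
      linarith
    rw [h2, Real.exp_log hx0]
    field_simp
  rw [hsum] at hseries
  -- derivative of log log
  have hll : HasDerivAt (fun y : ℝ => Real.log (Real.log y)) (1 / (x * t)) x := by
    have h1 : HasDerivAt Real.log x⁻¹ x := Real.hasDerivAt_log (ne_of_gt hx0)
    have h2 : HasDerivAt Real.log t⁻¹ t := Real.hasDerivAt_log (ne_of_gt ht)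
    have := h2.comp x h1
    refine this.congr_deriv ?_
    field_simp
  have := hll.add hseries
  refine this.congr_deriv ?_
  field_simp
  ring
end

section
/- For every positive integer N, the logarithmic integral satisfies the asymptotic expansion Li(x) = ∑_{k=1}^{N} (k−1)!·x/(ln x)^k + O( x/(ln x)^{N+1} ) as x → ∞; that is, the function x ↦ Li(x) − ∑_{k=1}^{N} (k−1)!·x/(ln x)^k is O(x/(ln x)^{N+1}) as x → ∞. -/
open Real Filter Asymptotics intervalIntegral

lemma li_cont (m : ℕ) {a b : ℝ} (ha : (2:ℝ) ≤ a) (hab : a ≤ b) :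
    IntervalIntegrable (fun t => 1 / Real.log t ^ m) MeasureTheory.volume a b := by
  apply ContinuousOn.intervalIntegrable
  rw [Set.uIcc_of_le hab]
  apply ContinuousOn.div continuousOn_const
  · exact (Real.continuousOn_log.mono (by intro t ht; simp; nlinarith [ht.1])).pow m
  · intro t ht
    have h2 : (0:ℝ) < Real.log t := Real.log_pos (by nlinarith [ht.1])
    positivity

lemma li_deriv (j : ℕ) {t : ℝ} (ht : 2 ≤ t) :
    HasDerivAt (fun y => y / Real.log y ^ (j+1))
      (1 / Real.log t ^ (j+1) - (j+1) * (1 / Real.log t ^ (j+2))) t := by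
  have ht0 : t ≠ 0 := by positivity
  have hlt : 0 < Real.log t := Real.log_pos (by linarith)
  have hlog : HasDerivAt Real.log t⁻¹ t := Real.hasDerivAt_log ht0
  have hpow : HasDerivAt (fun y => Real.log y ^ (j+1))
      ((j+1) * Real.log t ^ j * t⁻¹) t := by
    simpa using hlog.fun_pow (j+1)
  have := (hasDerivAt_id' t).fun_div hpow (by positivity)
  refine this.congr_deriv ?_
  field_simp
  ring

lemma li_ibp (j : ℕ) {a x : ℝ} (ha : 2 ≤ a) (hx : a ≤ x) :
    ∫ t in a..x, 1 / Real.log t ^ (j+1)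
      = x / Real.log x ^ (j+1) - a / Real.log a ^ (j+1)
        + (j+1) * ∫ t in a..x, 1 / Real.log t ^ (j+2) := by
  have hftc := intervalIntegral.integral_eq_sub_of_hasDerivAt
    (f := fun y => y / Real.log y ^ (j+1))
    (f' := fun t => 1 / Real.log t ^ (j+1) - (j+1) * (1 / Real.log t ^ (j+2)))
    (a := a) (b := x)
    (fun t ht => li_deriv j (by rw [Set.uIcc_of_le hx] at ht; linarith [ht.1]))
    (((li_cont (j+1) ha hx).sub (((li_cont (j+2) ha hx)).const_mul _)))
  rw [intervalIntegral.integral_sub (li_cont (j+1) ha hx)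
    ((li_cont (j+2) ha hx).const_mul _), intervalIntegral.integral_const_mul] at hftc
  linarith

lemma li_telescope (N : ℕ) (hN : 1 ≤ N) {x : ℝ} (hx : 2 ≤ x) :
    ∫ t in (2:ℝ)..x, 1 / Real.log t
      = ∑ k ∈ Finset.Icc 1 N, (Nat.factorial (k-1) : ℝ)
          * (x / Real.log x ^ k - 2 / Real.log 2 ^ k)
        + (Nat.factorial N : ℝ) * ∫ t in (2:ℝ)..x, 1 / Real.log t ^ (N+1) := by
  induction N, hN using Nat.le_induction with
  | base =>
    have h1 : (∫ t in (2:ℝ)..x, 1 / Real.log t) = ∫ t in (2:ℝ)..x, 1 / Real.log t ^ 1 := by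
      simp [pow_one]
    rw [h1, li_ibp 0 le_rfl hx]
    norm_num [Finset.Icc_self]
  | succ N hN ih =>
    rw [ih, Finset.sum_Icc_succ_top (by omega : 1 ≤ N + 1), li_ibp N le_rfl hx,
      Nat.factorial_succ]
    simp only [Nat.add_sub_cancel]
    push_cast
    ring

lemma li_one_isBigO (m : ℕ) :
    (fun _ : ℝ => (1:ℝ)) =O[atTop] fun x => x / Real.log x ^ m := by
  have h := (Real.isLittleO_pow_log_id_atTop (n := m)).def (by norm_num : (0:ℝ) < 1/2)
  rw [isBigO_iff]
  refine ⟨1/2, ?_⟩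
  filter_upwards [h, eventually_ge_atTop (Real.exp 1)] with x h1 h2
  have hx1 : (1:ℝ) ≤ Real.log x := by
    rw [← Real.log_exp 1]; exact Real.log_le_log (Real.exp_pos 1) h2
  have hx0 : (0:ℝ) < x := lt_of_lt_of_le (Real.exp_pos 1) h2
  have hlp : (0:ℝ) < Real.log x ^ m := by positivity
  rw [Real.norm_eq_abs, Real.norm_eq_abs, id_eq, abs_of_pos hx0, abs_of_pos hlp] at h1
  rw [Real.norm_eq_abs, Real.norm_eq_abs, abs_one,
    abs_of_pos (by positivity : (0:ℝ) < x / Real.log x ^ m),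
    show (1:ℝ)/2 * (x / Real.log x ^ m) = x / (2 * Real.log x ^ m) by ring,
    le_div_iff₀ (by positivity : (0:ℝ) < 2 * Real.log x ^ m)]
  nlinarith

lemma li_int_bound (j : ℕ) :
    (fun x => ∫ t in (2:ℝ)..x, 1 / Real.log t ^ (j+1)) =O[atTop]
      fun x => x / Real.log x ^ (j+1) := by
  set m := j + 1 with hm
  set x₀ : ℝ := max 2 (Real.exp (2*m)) with hx₀def
  have hx₀2 : (2:ℝ) ≤ x₀ := le_max_left _ _
  have hx₀e : Real.exp (2*m) ≤ x₀ := le_max_right _ _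
  set C₀ : ℝ := ∫ t in (2:ℝ)..x₀, 1 / Real.log t ^ m with hC₀
  have hsplit : ∀ x, x₀ ≤ x →
      (∫ t in (2:ℝ)..x, 1 / Real.log t ^ m)
        = C₀ + ∫ t in x₀..x, 1 / Real.log t ^ m := by
    intro x hx
    rw [hC₀, intervalIntegral.integral_add_adjacent_intervals
      (li_cont m le_rfl hx₀2) (li_cont m hx₀2 hx)]
  have htail : ∀ x, x₀ ≤ x →
      (∫ t in x₀..x, 1 / Real.log t ^ m) ≤ 2 * (x / Real.log x ^ m) := by
    intro x hx
    have hx2 : (2:ℝ) ≤ x := le_trans hx₀2 hx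
    have hftc : ∫ t in x₀..x,
        (2 * (1 / Real.log t ^ m - (j+1) * (1 / Real.log t ^ (j+2))))
        = 2 * (x / Real.log x ^ m) - 2 * (x₀ / Real.log x₀ ^ m) := by
      have := intervalIntegral.integral_eq_sub_of_hasDerivAt
        (f := fun y => 2 * (y / Real.log y ^ m))
        (f' := fun t => 2 * (1 / Real.log t ^ m - (j+1) * (1 / Real.log t ^ (j+2))))
        (a := x₀) (b := x)
        (fun t ht => by
          have ht2 : 2 ≤ t := by rw [Set.uIcc_of_le hx] at ht; linarith [ht.1]
          exact (li_deriv j ht2).const_mul 2)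
        (((li_cont m hx₀2 hx).sub ((li_cont (j+2) hx₀2 hx).const_mul _)).const_mul 2)
      simpa using this
    have hmono : (∫ t in x₀..x, 1 / Real.log t ^ m)
        ≤ ∫ t in x₀..x, (2 * (1 / Real.log t ^ m - (j+1) * (1 / Real.log t ^ (j+2)))) := by
      apply intervalIntegral.integral_mono_on hx (li_cont m hx₀2 hx)
        (((li_cont m hx₀2 hx).sub ((li_cont (j+2) hx₀2 hx).const_mul _)).const_mul 2)
      intro t ht
      have hL2m : 2 * (m:ℝ) ≤ Real.log t := by
        rw [← Real.log_exp (2*m)]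
        exact Real.log_le_log (Real.exp_pos _) (le_trans hx₀e ht.1)
      have hLpos : (0:ℝ) < Real.log t := by
        have : (1:ℝ) ≤ (m:ℝ) := by exact_mod_cast Nat.one_le_iff_ne_zero.2 (by omega)
        linarith
      set L := Real.log t
      have expand : 2 * (1 / L ^ m - ((j:ℝ)+1) * (1 / L ^ (j+2))) - 1 / L ^ m
          = (L - 2*((j:ℝ)+1)) / L ^ (j+2) := by
        rw [hm, pow_succ, pow_succ]
        field_simp
        ring
      have hnum : (0:ℝ) ≤ L - 2*((j:ℝ)+1) := by
        have : (m:ℝ) = (j:ℝ) + 1 := by push_cast [hm]; ring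
        linarith [hL2m, this ▸ hL2m]
      have := div_nonneg hnum (le_of_lt (pow_pos hLpos (j+2)))
      push_cast at expand ⊢
      linarith [expand ▸ this]
    have hg0 : 0 ≤ 2 * (x₀ / Real.log x₀ ^ m) := by
      have : (0:ℝ) < Real.log x₀ := Real.log_pos (by linarith)
      positivity
    linarith [hftc ▸ hmono]
  have htail0 : ∀ x, x₀ ≤ x → 0 ≤ ∫ t in x₀..x, 1 / Real.log t ^ m := by
    intro x hx
    apply intervalIntegral.integral_nonneg hx
    intro t ht
    have : (0:ℝ) < Real.log t := Real.log_pos (by nlinarith [ht.1])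
    positivity
  have hconst : (fun _ : ℝ => C₀) =O[atTop] fun x => x / Real.log x ^ m :=
    (isBigO_const_const C₀ one_ne_zero atTop).trans (li_one_isBigO m)
  have htailO : (fun x => ∫ t in x₀..x, 1 / Real.log t ^ m) =O[atTop]
      fun x => x / Real.log x ^ m := by
    rw [isBigO_iff]
    refine ⟨2, ?_⟩
    filter_upwards [eventually_ge_atTop x₀] with x hx
    have hx2 : (2:ℝ) ≤ x := le_trans hx₀2 hx
    have hlx : (0:ℝ) < Real.log x := Real.log_pos (by linarith)
    have hrhs : (0:ℝ) ≤ x / Real.log x ^ m := by positivity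
    rw [Real.norm_eq_abs, Real.norm_eq_abs, abs_of_nonneg (htail0 x hx), abs_of_nonneg hrhs]
    exact htail x hx
  refine (hconst.add htailO).congr' ?_ EventuallyEq.rfl
  filter_upwards [eventually_ge_atTop x₀] with x hx
  exact (hsplit x hx).symm


/-- For every positive integer `N`, the logarithmic integral `Li(x) = ∫₂ˣ dt/ln t`
satisfies the asymptotic expansion
`Li(x) = ∑_{k=1}^N (k-1)!·x/(ln x)^k + O(x/(ln x)^{N+1})` as `x → ∞`. -/
theorem li_asymptotic_expansion (N : ℕ) (hN : 0 < N) :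
    (fun x : ℝ =>
        (∫ t in (2 : ℝ)..x, 1 / Real.log t) -
          ∑ k ∈ Finset.Icc 1 N, (Nat.factorial (k - 1) : ℝ) * x / Real.log x ^ k)
      =O[atTop] (fun x : ℝ => x / Real.log x ^ (N + 1)) := by
  set c₀ : ℝ := -∑ k ∈ Finset.Icc 1 N, (Nat.factorial (k-1) : ℝ) * (2 / Real.log 2 ^ k)
    with hc₀
  have hO : (fun x : ℝ => c₀ + (Nat.factorial N : ℝ)
        * ∫ t in (2:ℝ)..x, 1 / Real.log t ^ (N+1)) =O[atTop]
      (fun x : ℝ => x / Real.log x ^ (N + 1)) :=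
    ((isBigO_const_const c₀ one_ne_zero atTop).trans (li_one_isBigO (N+1))).add
      ((li_int_bound N).const_mul_left _)
  refine hO.congr' ?_ EventuallyEq.rfl
  filter_upwards [eventually_ge_atTop (2:ℝ)] with x hx
  rw [li_telescope N hN hx, hc₀]
  simp only [mul_sub, Finset.sum_sub_distrib, mul_div_assoc]
  ring
end

section
/- Let x be real, L > 0, n a positive integer, and let e₁ < e₂ < ⋯ < e_n be real numbers with x < e_k < x + L for all k. Let N(t) = #{ k : e_k ≤ t } be the counting staircase and set ẽ_k = e_k − (x + L/2). Then the minimum over all (a, b) ∈ ℝ² of (1/L)·∫₀^L ( N(x + ε) − a·ε − b )² dε is attained and equals n²/16 − (1/L²)·( ∑_{k=1}^{n} ẽ_k )² + (3n/(2L²))·∑_{k=1}^{n} ẽ_k² − (3/L⁴)·( ∑_{k=1}^{n} ẽ_k² )² + (1/L)·∑_{k=1}^{n} (n − 2k + 1)·ẽ_k. -/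
open MeasureTheory Finset Set

lemma bg_mem_filter_iff {n : ℕ} (e : Fin n → ℝ) (hmono : StrictMono e) (t : ℝ) (k : Fin n) :
    e k ≤ t ↔ (k : ℕ) < (Finset.univ.filter (fun j : Fin n => e j ≤ t)).card := by
  set s := Finset.univ.filter (fun j : Fin n => e j ≤ t) with hs
  constructor
  · intro hk
    have hsub : Finset.Iic k ⊆ s := by
      intro j hj
      simp only [Finset.mem_Iic] at hj
      simp only [hs, Finset.mem_filter, Finset.mem_univ, true_and]
      exact le_trans (hmono.monotone hj) hk
    have := Finset.card_le_card hsub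
    rw [Fin.card_Iic] at this
    omega
  · intro hk
    by_contra hke
    have hsub : s ⊆ Finset.Iio k := by
      intro j hj
      simp only [hs, Finset.mem_filter, Finset.mem_univ, true_and] at hj
      simp only [Finset.mem_Iio]
      by_contra hjk
      exact hke (le_trans (hmono.monotone (not_lt.mp hjk)) hj)
    have := Finset.card_le_card hsub
    rw [Fin.card_Iio] at this
    omega

lemma bg_sum_odd (m : ℕ) : ∑ j ∈ Finset.range m, (2 * (j : ℝ) + 1) = (m : ℝ) ^ 2 := by
  induction m with
  | zero => simp
  | succ m ih => rw [Finset.sum_range_succ, ih]; push_cast; ring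

lemma bg_card_eq {n : ℕ} (e : Fin n → ℝ) (t : ℝ) :
    (((Finset.univ.filter (fun j : Fin n => e j ≤ t)).card : ℝ)) =
      ∑ k : Fin n, (if e k ≤ t then (1 : ℝ) else 0) := by
  rw [Finset.card_filter]
  push_cast
  exact Finset.sum_congr rfl fun k _ => by split_ifs <;> simp

lemma bg_sq_card_eq {n : ℕ} (e : Fin n → ℝ) (hmono : StrictMono e) (t : ℝ) :
    (((Finset.univ.filter (fun j : Fin n => e j ≤ t)).card : ℝ)) ^ 2 =
      ∑ k : Fin n, (if e k ≤ t then (2 * (k : ℕ) + 1 : ℝ) else 0) := by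
  set m := (Finset.univ.filter (fun j : Fin n => e j ≤ t)).card with hm
  have hmn : m ≤ n := by
    have := Finset.card_filter_le (Finset.univ : Finset (Fin n)) (fun j : Fin n => e j ≤ t)
    simpa using this
  have h1 : ∀ k : Fin n, (if e k ≤ t then (2 * (k : ℕ) + 1 : ℝ) else 0)
      = (if (k : ℕ) < m then (2 * (k : ℕ) + 1 : ℝ) else 0) := fun k => by
    rw [if_congr (bg_mem_filter_iff e hmono t k) rfl rfl]
  calc ((m : ℝ)) ^ 2 = ∑ j ∈ Finset.range m, (2 * (j : ℝ) + 1) := (bg_sum_odd m).symm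
    _ = ∑ j ∈ Finset.range n, (if j < m then (2 * (j : ℝ) + 1) else 0) := by
        rw [← Finset.sum_filter]
        congr 1
        ext j
        simp only [Finset.mem_filter, Finset.mem_range]
        omega
    _ = ∑ k : Fin n, (if (k : ℕ) < m then (2 * (k : ℕ) + 1 : ℝ) else 0) := by
        rw [Fin.sum_univ_eq_sum_range (fun j => (if j < m then (2 * (j : ℝ) + 1) else 0))]
    _ = ∑ k : Fin n, (if e k ≤ t then (2 * (k : ℕ) + 1 : ℝ) else 0) :=
        (Finset.sum_congr rfl fun k _ => (h1 k).symm)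

lemma bg_step_integral (d L : ℝ) (hd : 0 < d) (hdL : d ≤ L) (g : ℝ → ℝ) :
    ∫ ε in (0:ℝ)..L, (Set.Ici d).indicator g ε = ∫ ε in d..L, g ε := by
  rw [intervalIntegral.integral_of_le (le_trans hd.le hdL), intervalIntegral.integral_of_le hdL,
    MeasureTheory.integral_indicator measurableSet_Ici,
    Measure.restrict_restrict measurableSet_Ici]
  have h : Set.Ici d ∩ Set.Ioc 0 L = Set.Icc d L := by
    ext y
    simp only [Set.mem_inter_iff, Set.mem_Ici, Set.mem_Ioc, Set.mem_Icc]
    constructor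
    · rintro ⟨h1, _, h3⟩; exact ⟨h1, h3⟩
    · rintro ⟨h1, h2⟩; exact ⟨h1, lt_of_lt_of_le hd h1, h2⟩
  rw [h, MeasureTheory.integral_Icc_eq_integral_Ioc]

lemma bg_poly2_integral (d L p q r : ℝ) :
    ∫ ε in d..L, (p + q * ε + r * ε ^ 2)
      = p * (L - d) + q * (L ^ 2 - d ^ 2) / 2 + r * (L ^ 3 - d ^ 3) / 3 := by
  have hderiv : ∀ y ∈ Set.uIcc d L,
      HasDerivAt (fun ε : ℝ => p * ε + (q / 2) * ε ^ 2 + (r / 3) * ε ^ 3)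
        (p + q * y + r * y ^ 2) y := by
    intro y _
    have h0 := (hasDerivAt_id y).const_mul p
    have h1 := (hasDerivAt_pow 2 y).const_mul (q / 2)
    have h2 := (hasDerivAt_pow 3 y).const_mul (r / 3)
    refine ((h0.add h1).add h2).congr_deriv ?_
    push_cast
    ring
  rw [intervalIntegral.integral_eq_sub_of_hasDerivAt hderiv
    ((by fun_prop : Continuous fun ε : ℝ => p + q * ε + r * ε ^ 2).intervalIntegrable d L)]
  ring

/-- Bohigas–Giannoni explicit formula for the spectral rigidity `Δ₃`.
Let `L > 0`, let `e₁ < e₂ < ⋯ < e_n` be levels with `x < e_k < x + L`, let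
`N(t) = #{k : e_k ≤ t}` be the counting staircase and `ẽ_k = e_k - (x + L/2)`.
Then the minimum over `(a, b) ∈ ℝ²` of `(1/L)·∫₀ᴸ (N(x+ε) - aε - b)² dε` is attained
and equals
`n²/16 - (1/L²)(∑ ẽ_k)² + (3n/(2L²))·∑ ẽ_k² - (3/L⁴)(∑ ẽ_k²)² + (1/L)·∑ (n - 2k + 1)·ẽ_k`. -/
theorem bohigas_giannoni_delta3 (x L : ℝ) (hL : 0 < L) (n : ℕ) (hn : 0 < n)
    (e : Fin n → ℝ) (hmono : StrictMono e)
    (hbound : ∀ k : Fin n, x < e k ∧ e k < x + L) :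
    IsLeast
      {v : ℝ | ∃ a b : ℝ,
        v = (1 / L) * ∫ ε in (0 : ℝ)..L,
          (((Finset.univ.filter (fun k : Fin n => e k ≤ x + ε)).card : ℝ) - a * ε - b) ^ 2}
      ((n : ℝ) ^ 2 / 16
        - (1 / L ^ 2) * (∑ k : Fin n, (e k - (x + L / 2))) ^ 2
        + (3 * (n : ℝ) / (2 * L ^ 2)) * ∑ k : Fin n, (e k - (x + L / 2)) ^ 2
        - (3 / L ^ 4) * (∑ k : Fin n, (e k - (x + L / 2)) ^ 2) ^ 2
        + (1 / L) * ∑ k : Fin n, ((n : ℝ) - 2 * ((k : ℕ) + 1 : ℝ) + 1) * (e k - (x + L / 2))) := by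
  have hLne : L ≠ 0 := ne_of_gt hL
  set S1 : ℝ := ∑ k : Fin n, (e k - (x + L / 2)) with hS1
  set S2 : ℝ := ∑ k : Fin n, (e k - (x + L / 2)) ^ 2 with hS2
  set K : ℝ := ∑ k : Fin n, (2 * (k : ℕ) + 1 : ℝ) * (e k - (x + L / 2)) with hK
  have hW : ∑ k : Fin n, ((n : ℝ) - 2 * ((k : ℕ) + 1 : ℝ) + 1) * (e k - (x + L / 2))
      = (n : ℝ) * S1 - K := by
    rw [hS1, hK, Finset.mul_sum, ← Finset.sum_sub_distrib]
    exact Finset.sum_congr rfl fun k _ => by ring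
  have hSodd : ∑ k : Fin n, (2 * (k : ℕ) + 1 : ℝ) = (n : ℝ) ^ 2 := by
    rw [Fin.sum_univ_eq_sum_range (fun j => (2 * (j : ℝ) + 1))]
    exact bg_sum_odd n
  -- closed form of the integral
  have hint : ∀ a b : ℝ,
      (∫ ε in (0 : ℝ)..L,
        (((Finset.univ.filter (fun k : Fin n => e k ≤ x + ε)).card : ℝ) - a * ε - b) ^ 2)
      = (L / 2) * (n : ℝ) ^ 2 + (-1) * K + (n : ℝ) * (-(b * L) - 3 / 4 * a * L ^ 2)
        + (2 * b + a * L) * S1 + a * S2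
        + (a ^ 2 * L ^ 3 / 3 + a * b * L ^ 2 + b ^ 2 * L) := by
    intro a b
    have hpt : ∀ ε : ℝ,
        (((Finset.univ.filter (fun k : Fin n => e k ≤ x + ε)).card : ℝ) - a * ε - b) ^ 2
        = (∑ k : Fin n,
            (Set.Ici (e k - x)).indicator
              (fun ε' => ((2 * (k : ℕ) + 1 : ℝ) - 2 * b) + (-(2 * a)) * ε' + 0 * ε' ^ 2) ε)
          + (b ^ 2 + (2 * a * b) * ε + a ^ 2 * ε ^ 2) := by
      intro ε
      have hind : ∀ k : Fin n,
          (Set.Ici (e k - x)).indicator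
            (fun ε' => ((2 * (k : ℕ) + 1 : ℝ) - 2 * b) + (-(2 * a)) * ε' + 0 * ε' ^ 2) ε
          = (if e k ≤ x + ε then ((2 * (k : ℕ) + 1 : ℝ) - 2 * b) + (-(2 * a)) * ε + 0 * ε ^ 2
             else 0) := fun k => by
        simp only [Set.indicator_apply, Set.mem_Ici, sub_le_iff_le_add']
      rw [Finset.sum_congr rfl fun k _ => hind k]
      have hc := bg_card_eq e (x + ε)
      have hs := bg_sq_card_eq e hmono (x + ε)
      calc (((Finset.univ.filter (fun k : Fin n => e k ≤ x + ε)).card : ℝ) - a * ε - b) ^ 2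
          = ((Finset.univ.filter (fun k : Fin n => e k ≤ x + ε)).card : ℝ) ^ 2
            - (2 * (a * ε + b)) * ((Finset.univ.filter (fun k : Fin n => e k ≤ x + ε)).card : ℝ)
            + (b ^ 2 + (2 * a * b) * ε + a ^ 2 * ε ^ 2) := by ring
        _ = _ := by
            rw [hs, hc, Finset.mul_sum, ← Finset.sum_sub_distrib]
            congr 1
            exact Finset.sum_congr rfl fun k _ => by split_ifs <;> ring
    simp only [hpt]
    have hik : ∀ k : Fin n,
        IntervalIntegrable
          ((Set.Ici (e k - x)).indicator
            (fun ε' => ((2 * (k : ℕ) + 1 : ℝ) - 2 * b) + (-(2 * a)) * ε' + 0 * ε' ^ 2))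
          volume 0 L := by
      intro k
      have hcont : Continuous
          (fun ε' : ℝ => ((2 * (k : ℕ) + 1 : ℝ) - 2 * b) + (-(2 * a)) * ε' + 0 * ε' ^ 2) := by
        fun_prop
      have := hcont.intervalIntegrable (μ := volume) (0 : ℝ) L
      rw [intervalIntegrable_iff] at this ⊢
      exact this.indicator measurableSet_Ici
    have hsumInt : IntervalIntegrable
        (fun ε => ∑ k : Fin n,
          (Set.Ici (e k - x)).indicator
            (fun ε' => ((2 * (k : ℕ) + 1 : ℝ) - 2 * b) + (-(2 * a)) * ε' + 0 * ε' ^ 2) ε)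
        volume 0 L := by
      have h := IntervalIntegrable.sum (μ := volume) (a := (0:ℝ)) (b := L) Finset.univ
        (fun k _ => hik k)
      rwa [Finset.sum_fn] at h
    rw [intervalIntegral.integral_add hsumInt
        ((by fun_prop : Continuous fun ε : ℝ => b ^ 2 + (2 * a * b) * ε + a ^ 2 * ε ^ 2).intervalIntegrable 0 L),
      intervalIntegral.integral_finset_sum fun k _ => hik k]
    have hstepk : ∀ k : Fin n,
        (∫ ε in (0 : ℝ)..L,
          (Set.Ici (e k - x)).indicator
            (fun ε' => ((2 * (k : ℕ) + 1 : ℝ) - 2 * b) + (-(2 * a)) * ε' + 0 * ε' ^ 2) ε)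
        = ((2 * (k : ℕ) + 1 : ℝ) - 2 * b) * (L - (e k - x))
          + (-(2 * a)) * (L ^ 2 - (e k - x) ^ 2) / 2 + 0 * (L ^ 3 - (e k - x) ^ 3) / 3 := by
      intro k
      rw [bg_step_integral (e k - x) L (by linarith [(hbound k).1]) (by linarith [(hbound k).2]),
        bg_poly2_integral]
    rw [Finset.sum_congr rfl fun k _ => hstepk k, bg_poly2_integral]
    have hsum : ∑ k : Fin n,
        (((2 * (k : ℕ) + 1 : ℝ) - 2 * b) * (L - (e k - x))
          + (-(2 * a)) * (L ^ 2 - (e k - x) ^ 2) / 2 + 0 * (L ^ 3 - (e k - x) ^ 3) / 3)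
        = (L / 2) * (n : ℝ) ^ 2 + (-1) * K + (n : ℝ) * (-(b * L) - 3 / 4 * a * L ^ 2)
          + (2 * b + a * L) * S1 + a * S2 := by
      rw [hS1, hS2, hK, ← hSodd]
      calc ∑ k : Fin n,
          (((2 * (k : ℕ) + 1 : ℝ) - 2 * b) * (L - (e k - x))
            + (-(2 * a)) * (L ^ 2 - (e k - x) ^ 2) / 2 + 0 * (L ^ 3 - (e k - x) ^ 3) / 3)
          = ∑ k : Fin n,
            ((L / 2) * (2 * (k : ℕ) + 1 : ℝ)
              + (-1) * ((2 * (k : ℕ) + 1 : ℝ) * (e k - (x + L / 2)))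
              + (-(b * L) - 3 / 4 * a * L ^ 2)
              + (2 * b + a * L) * (e k - (x + L / 2))
              + a * (e k - (x + L / 2)) ^ 2) :=
            Finset.sum_congr rfl fun k _ => by ring
        _ = _ := by
            rw [Finset.sum_add_distrib, Finset.sum_add_distrib, Finset.sum_add_distrib,
              Finset.sum_add_distrib, ← Finset.mul_sum, ← Finset.mul_sum, ← Finset.mul_sum,
              ← Finset.mul_sum, Finset.sum_const, Finset.card_univ, Fintype.card_fin,
              nsmul_eq_mul]
    rw [hsum]
    ring
  -- key completed-square identity
  set A : ℝ := 3 * (n : ℝ) / (2 * L) - 6 * S2 / L ^ 3 with hA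
  set B : ℝ := -(n : ℝ) / 4 - S1 / L + 3 * S2 / L ^ 2 with hB
  have key : ∀ a b : ℝ,
      (1 / L) * ∫ ε in (0 : ℝ)..L,
        (((Finset.univ.filter (fun k : Fin n => e k ≤ x + ε)).card : ℝ) - a * ε - b) ^ 2
      = ((n : ℝ) ^ 2 / 16 - (1 / L ^ 2) * S1 ^ 2 + (3 * (n : ℝ) / (2 * L ^ 2)) * S2
          - (3 / L ^ 4) * S2 ^ 2 + (1 / L) * ((n : ℝ) * S1 - K))
        + (1 / L) * (L ^ 3 / 3 * (a - A) ^ 2 + L ^ 2 * (a - A) * (b - B) + L * (b - B) ^ 2) := by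
    intro a b
    rw [hint a b, hA, hB]
    field_simp
    ring
  have hq : ∀ u v : ℝ, 0 ≤ L ^ 3 / 3 * u ^ 2 + L ^ 2 * u * v + L * v ^ 2 := by
    intro u v
    nlinarith [mul_nonneg hL.le (sq_nonneg (L * u + 2 * v)), mul_nonneg hL.le (sq_nonneg (L * u))]
  rw [hW]
  constructor
  · refine ⟨A, B, ?_⟩
    rw [key A B]
    ring
  · rintro v ⟨a, b, rfl⟩
    rw [key a b]
    have h1 : 0 ≤ (1 / L) * (L ^ 3 / 3 * (a - A) ^ 2 + L ^ 2 * (a - A) * (b - B) + L * (b - B) ^ 2) :=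
      mul_nonneg (by positivity) (hq _ _)
    linarith
end
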